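/- Assume the local datasets satisfy y⁽ⁱ⁾ = X⁽ⁱ⁾ w̄ + ε⁽ⁱ⁾ for every node i = 1,…,n with one common parameter vector w̄ ∈ ℝ^d, that λ₂(L) > 0, and that λ̄_min > 0. Let (ŵ⁽¹⁾,…,ŵ⁽ⁿ⁾) be the solution of GTVMin and let c̄ = (1/n) Σ_{i=1}^n ŵ⁽ⁱ⁾ be the average of the learnt local parameters. Then ‖c̄ − w̄‖₂² ≤ 2 ( λ_max + λ_max²/(λ₂(L) α) ) · Σ_{i=1}^n (1/mᵢ) ‖ε⁽ⁱ⁾‖₂² / ( n λ̄_min² ). -/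

import Mathlib

open Matrix Finset
open scoped Kronecker

noncomputable section

/-- The Laplacian matrix of the empirical graph with edge-weight matrix `A`. -/
def lap {n : ℕ} (A : Matrix (Fin n) (Fin n) ℝ) : Matrix (Fin n) (Fin n) ℝ :=
  Matrix.of fun i j => if i = j then ∑ k ∈ Finset.univ.erase i, A i k else -A i j

/-- The eigenvalues of a real symmetric matrix, in arbitrary order
(junk value `0` if the matrix is not symmetric). -/
def matEigs {ι : Type*} [Fintype ι] [DecidableEq ι] (M : Matrix ι ι ℝ) : ι → ℝ :=
  @dite _ M.IsHermitian (Classical.dec _) (fun h => h.eigenvalues) (fun _ => 0)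

/-- The smallest eigenvalue of a real symmetric matrix. -/
def lamMin {ι : Type*} [Fintype ι] [DecidableEq ι] (M : Matrix ι ι ℝ) : ℝ :=
  ⨅ k, matEigs M k

/-- The largest eigenvalue of a real symmetric matrix. -/
def lamMax {ι : Type*} [Fintype ι] [DecidableEq ι] (M : Matrix ι ι ℝ) : ℝ :=
  ⨆ k, matEigs M k

/-- The eigenvalues of a real symmetric matrix, sorted in ascending order. -/
def sortedEigs {ι : Type*} [Fintype ι] [DecidableEq ι] (M : Matrix ι ι ℝ) :
    Fin (Fintype.card ι) → ℝ := fun k =>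
  matEigs (Matrix.reindex (Fintype.equivFin ι) (Fintype.equivFin ι) M)
    (Tuple.sort (matEigs (Matrix.reindex (Fintype.equivFin ι) (Fintype.equivFin ι) M)) k)

/-- The second-smallest eigenvalue `λ₂` of a real symmetric matrix
(junk value `0` for matrices of size `< 2`). -/
def eigTwo {ι : Type*} [Fintype ι] [DecidableEq ι] (M : Matrix ι ι ℝ) : ℝ :=
  if h : 1 < Fintype.card ι then sortedEigs M ⟨1, h⟩ else 0

/-- The GTVMin objective for local linear models: the sum of the local average squared-error
losses plus `α` times the GTV, the latter being a sum over unordered pairs of nodes. -/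
def gtvObj {n d : ℕ} (A : Matrix (Fin n) (Fin n) ℝ) (m : Fin n → ℕ)
    (X : (i : Fin n) → Matrix (Fin (m i)) (Fin d) ℝ)
    (y : (i : Fin n) → EuclideanSpace ℝ (Fin (m i)))
    (α : ℝ) (w : Fin n → EuclideanSpace ℝ (Fin d)) : ℝ :=
  (∑ i, (1 / (m i : ℝ)) * ‖y i - Matrix.toEuclideanLin (X i) (w i)‖ ^ 2) +
    α * ∑ p ∈ Finset.univ.filter (fun p : Fin n × Fin n => p.1 < p.2),
      A p.1 p.2 * ‖w p.1 - w p.2‖ ^ 2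

lemma einner_eq_dot {k : ℕ} (u v : EuclideanSpace ℝ (Fin k)) :
    (inner ℝ u v : ℝ) = (WithLp.equiv 2 _ u) ⬝ᵥ (WithLp.equiv 2 _ v) := by
  simp [PiLp.inner_apply, dotProduct, RCLike.inner_apply, mul_comm]

lemma repr_toEuclideanLin {k : ℕ} {M : Matrix (Fin k) (Fin k) ℝ} (hM : M.IsHermitian)
    (x : EuclideanSpace ℝ (Fin k)) (j : Fin k) :
    (inner ℝ (hM.eigenvectorBasis j) (Matrix.toEuclideanLin M x) : ℝ)
      = hM.eigenvalues j * inner ℝ (hM.eigenvectorBasis j) x := by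
  have hMt : Mᵀ = M := (by simpa using hM : M.IsSymm)
  rw [einner_eq_dot, einner_eq_dot]
  have h2 : (WithLp.equiv 2 _ (Matrix.toEuclideanLin M x)) = M *ᵥ (WithLp.equiv 2 _ x) := rfl
  rw [h2, dotProduct_mulVec, ← mulVec_transpose, hMt, WithLp.equiv_apply, hM.mulVec_eigenvectorBasis,
    smul_dotProduct, smul_eq_mul]

-- Parseval-type expansions

lemma inner_eq_sum_repr {k : ℕ} (b : OrthonormalBasis (Fin k) ℝ (EuclideanSpace ℝ (Fin k)))
    (x y : EuclideanSpace ℝ (Fin k)) :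
    (inner ℝ x y : ℝ) = ∑ j, (inner ℝ (b j) x : ℝ) * (inner ℝ (b j) y : ℝ) := by
  rw [← b.repr.inner_map_map x y, einner_eq_dot]
  simp [dotProduct, b.repr_apply_apply]

lemma normsq_eq_sum_repr {k : ℕ} (b : OrthonormalBasis (Fin k) ℝ (EuclideanSpace ℝ (Fin k)))
    (x : EuclideanSpace ℝ (Fin k)) :
    ‖x‖ ^ 2 = ∑ j, (inner ℝ (b j) x : ℝ) ^ 2 := by
  rw [← real_inner_self_eq_norm_sq, inner_eq_sum_repr b]
  simp [sq]

lemma quad_eq_sum {k : ℕ} {M : Matrix (Fin k) (Fin k) ℝ} (hM : M.IsHermitian)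
    (x : EuclideanSpace ℝ (Fin k)) :
    (inner ℝ x (Matrix.toEuclideanLin M x) : ℝ)
      = ∑ j, hM.eigenvalues j * (inner ℝ (hM.eigenvectorBasis j) x : ℝ) ^ 2 := by
  rw [inner_eq_sum_repr hM.eigenvectorBasis]
  exact Finset.sum_congr rfl fun j _ => by rw [repr_toEuclideanLin hM]; ring

lemma normsq_toEuclideanLin_eq_sum {k : ℕ} {M : Matrix (Fin k) (Fin k) ℝ} (hM : M.IsHermitian)
    (x : EuclideanSpace ℝ (Fin k)) :
    ‖Matrix.toEuclideanLin M x‖ ^ 2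
      = ∑ j, hM.eigenvalues j ^ 2 * (inner ℝ (hM.eigenvectorBasis j) x : ℝ) ^ 2 := by
  rw [normsq_eq_sum_repr hM.eigenvectorBasis]
  exact Finset.sum_congr rfl fun j _ => by rw [repr_toEuclideanLin hM]; ring

lemma matEigs_eq {k : ℕ} {M : Matrix (Fin k) (Fin k) ℝ} (hM : M.IsHermitian) :
    matEigs M = hM.eigenvalues := dif_pos hM

lemma lamMin_le_eig {k : ℕ} {M : Matrix (Fin k) (Fin k) ℝ} (hM : M.IsHermitian) (j : Fin k) :
    lamMin M ≤ hM.eigenvalues j := by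
  rw [lamMin, matEigs_eq hM]
  exact ciInf_le (Set.Finite.bddBelow (Set.finite_range _)) j

lemma eig_le_lamMax {k : ℕ} {M : Matrix (Fin k) (Fin k) ℝ} (hM : M.IsHermitian) (j : Fin k) :
    hM.eigenvalues j ≤ lamMax M := by
  rw [lamMax, matEigs_eq hM]
  exact le_ciSup (Set.Finite.bddAbove (Set.finite_range _)) j

lemma lamMin_mul_normsq_le {k : ℕ} [Nonempty (Fin k)] {M : Matrix (Fin k) (Fin k) ℝ}
    (hM : M.IsHermitian) (x : EuclideanSpace ℝ (Fin k)) :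
    lamMin M * ‖x‖ ^ 2 ≤ inner ℝ x (Matrix.toEuclideanLin M x) := by
  rw [quad_eq_sum hM, normsq_eq_sum_repr hM.eigenvectorBasis, Finset.mul_sum]
  exact Finset.sum_le_sum fun j _ =>
    mul_le_mul_of_nonneg_right (lamMin_le_eig hM j) (sq_nonneg _)

lemma lamMax_nonneg {k : ℕ} [Nonempty (Fin k)] {M : Matrix (Fin k) (Fin k) ℝ}
    (hM : M.PosSemidef) : 0 ≤ lamMax M := by
  obtain ⟨j⟩ := ‹Nonempty (Fin k)›
  exact le_trans (hM.eigenvalues_nonneg j) (eig_le_lamMax hM.1 j)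

lemma quad_le_lamMax {k : ℕ} [Nonempty (Fin k)] {M : Matrix (Fin k) (Fin k) ℝ}
    (hM : M.IsHermitian) (x : EuclideanSpace ℝ (Fin k)) :
    (inner ℝ x (Matrix.toEuclideanLin M x) : ℝ) ≤ lamMax M * ‖x‖ ^ 2 := by
  rw [quad_eq_sum hM, normsq_eq_sum_repr hM.eigenvectorBasis, Finset.mul_sum]
  exact Finset.sum_le_sum fun j _ =>
    mul_le_mul_of_nonneg_right (eig_le_lamMax hM j) (sq_nonneg _)

lemma normsq_toEuclideanLin_le {k : ℕ} [Nonempty (Fin k)] {M : Matrix (Fin k) (Fin k) ℝ}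
    (hM : M.PosSemidef) (x : EuclideanSpace ℝ (Fin k)) :
    ‖Matrix.toEuclideanLin M x‖ ^ 2 ≤ lamMax M ^ 2 * ‖x‖ ^ 2 := by
  rw [normsq_toEuclideanLin_eq_sum hM.1, normsq_eq_sum_repr hM.1.eigenvectorBasis,
    Finset.mul_sum]
  refine Finset.sum_le_sum fun j _ => mul_le_mul_of_nonneg_right ?_ (sq_nonneg _)
  exact pow_le_pow_left₀ (hM.eigenvalues_nonneg j) (eig_le_lamMax hM.1 j) 2

lemma lap_quad_eq {n : ℕ} (A : Matrix (Fin n) (Fin n) ℝ)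
    (hAsymm : ∀ i j, A i j = A j i) (hAdiag : ∀ i, A i i = 0) (x : Fin n → ℝ) :
    (2 : ℝ) * ∑ p ∈ Finset.univ.filter (fun p : Fin n × Fin n => p.1 < p.2),
        A p.1 p.2 * (x p.1 - x p.2) ^ 2
      = 2 * (x ⬝ᵥ (lap A *ᵥ x)) := by
  set F : Fin n × Fin n → ℝ := fun p => A p.1 p.2 * (x p.1 - x p.2) ^ 2 with hF
  have hswap : ∑ p ∈ Finset.univ.filter (fun p : Fin n × Fin n => p.1 < p.2), F p
      = ∑ p ∈ Finset.univ.filter (fun p : Fin n × Fin n => p.2 < p.1), F p := by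
    refine Finset.sum_equiv (Equiv.prodComm _ _) (fun p => ?_) (fun p hp => ?_)
    · simp [Equiv.prodComm]
    · simp only [hF, Equiv.prodComm_apply, Prod.snd_swap, Prod.fst_swap]
      rw [hAsymm]; ring
  have htot : ∑ p ∈ (Finset.univ : Finset (Fin n × Fin n)), F p
      = ∑ p ∈ Finset.univ.filter (fun p : Fin n × Fin n => p.1 < p.2), F p
        + ∑ p ∈ Finset.univ.filter (fun p : Fin n × Fin n => p.2 < p.1), F p := by
    rw [← Finset.sum_filter_add_sum_filter_not Finset.univ
      (fun p : Fin n × Fin n => p.1 < p.2) F]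
    congr 1
    rw [← Finset.sum_filter_add_sum_filter_not
      (Finset.univ.filter (fun p : Fin n × Fin n => ¬ p.1 < p.2))
      (fun p : Fin n × Fin n => p.2 < p.1) F]
    have h1 : (Finset.univ.filter (fun p : Fin n × Fin n => ¬ p.1 < p.2)).filter
        (fun p : Fin n × Fin n => p.2 < p.1)
        = Finset.univ.filter (fun p : Fin n × Fin n => p.2 < p.1) := by
      rw [Finset.filter_filter]
      exact Finset.filter_congr fun p _ => by
        constructor
        · exact fun h => h.2
        · exact fun h => ⟨not_lt_of_gt h, h⟩
    have h2 : ∑ p ∈ (Finset.univ.filter (fun p : Fin n × Fin n => ¬ p.1 < p.2)).filter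
        (fun p : Fin n × Fin n => ¬ p.2 < p.1), F p = 0 := by
      refine Finset.sum_eq_zero fun p hp => ?_
      simp only [Finset.mem_filter] at hp
      have : p.1 = p.2 := le_antisymm (not_lt.mp hp.2) (not_lt.mp hp.1.2)
      simp [hF, this]
    rw [h1, h2, add_zero]
  have hrow : ∀ i, (lap A *ᵥ x) i = (∑ j, A i j) * x i - ∑ j, A i j * x j := by
    intro i
    have : (lap A *ᵥ x) i = ∑ j, lap A i j * x j := rfl
    rw [this, ← Finset.add_sum_erase _ _ (Finset.mem_univ i)]
    have hd : lap A i i * x i = (∑ j, A i j) * x i := by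
      have hdd : lap A i i = ∑ k ∈ Finset.univ.erase i, A i k := if_pos rfl
      rw [hdd, Finset.sum_erase_eq_sub (Finset.mem_univ i), hAdiag, sub_zero]
    have ho : ∑ j ∈ Finset.univ.erase i, lap A i j * x j
        = ∑ j ∈ Finset.univ.erase i, -(A i j * x j) := by
      refine Finset.sum_congr rfl fun j hj => ?_
      have hji : j ≠ i := Finset.ne_of_mem_erase hj
      simp only [lap, Matrix.of_apply, if_neg (Ne.symm hji)]; ring
    rw [hd, ho, Finset.sum_neg_distrib,
      Finset.sum_erase_eq_sub (Finset.mem_univ i), hAdiag]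
    ring
  have hlhs : x ⬝ᵥ (lap A *ᵥ x)
      = (∑ i, ∑ j, A i j * x i ^ 2) - ∑ i, ∑ j, A i j * (x i * x j) := by
    rw [dotProduct, ← Finset.sum_sub_distrib]
    refine Finset.sum_congr rfl fun i _ => ?_
    rw [hrow i, ← Finset.sum_sub_distrib]
    have h1 : ∀ j, A i j * x i ^ 2 - A i j * (x i * x j)
        = x i * (A i j * x i - A i j * x j) := fun j => by ring
    simp_rw [h1, ← Finset.mul_sum, Finset.sum_sub_distrib, ← Finset.sum_mul]
  have hx2 : ∑ i, ∑ j, A i j * x j ^ 2 = ∑ i, ∑ j, A i j * x i ^ 2 := by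
    rw [Finset.sum_comm]
    exact Finset.sum_congr rfl fun i _ => Finset.sum_congr rfl fun j _ => by rw [hAsymm]
  have hexp : ∑ p ∈ (Finset.univ : Finset (Fin n × Fin n)), F p
      = 2 * ((∑ i, ∑ j, A i j * x i ^ 2) - ∑ i, ∑ j, A i j * (x i * x j)) := by
    rw [← Finset.univ_product_univ, Finset.sum_product]
    have : ∀ i j : Fin n, F (i, j)
        = A i j * x i ^ 2 + A i j * x j ^ 2 - 2 * (A i j * (x i * x j)) := by
      intro i j; simp only [hF]; ring
    simp_rw [this, Finset.sum_sub_distrib, Finset.sum_add_distrib, hx2, ← Finset.mul_sum]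
    ring
  calc (2:ℝ) * ∑ p ∈ Finset.univ.filter (fun p : Fin n × Fin n => p.1 < p.2), F p
      = ∑ p ∈ (Finset.univ : Finset (Fin n × Fin n)), F p := by rw [htot, hswap]; ring
    _ = 2 * (x ⬝ᵥ (lap A *ᵥ x)) := by rw [hexp, hlhs]

lemma second_eig_rayleigh {N : ℕ} (hN : 1 < N) {M : Matrix (Fin N) (Fin N) ℝ}
    (hM : M.IsHermitian)
    (hone : Matrix.toEuclideanLin M ((WithLp.equiv 2 _).symm (fun _ => (1:ℝ))) = 0)
    {t : ℝ} (hts : t = hM.eigenvalues (Tuple.sort hM.eigenvalues ⟨1, hN⟩)) (ht : 0 < t)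
    (x : EuclideanSpace ℝ (Fin N)) (hx : ∑ i, x i = 0) :
    t * ‖x‖ ^ 2 ≤ inner ℝ x (Matrix.toEuclideanLin M x) := by
  set lam := hM.eigenvalues with hlam
  set s := Tuple.sort lam with hs
  set b := hM.eigenvectorBasis with hb
  set j0 : Fin N := s ⟨0, by omega⟩ with hj0
  set one : EuclideanSpace ℝ (Fin N) := (WithLp.equiv 2 _).symm (fun _ => (1:ℝ)) with hone'
  -- eigenvalues other than at j0 are ≥ t
  have hge : ∀ j : Fin N, j ≠ j0 → t ≤ lam j := by
    intro j hj
    have hk : j = s (s.symm j) := (Equiv.apply_symm_apply s j).symm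
    have hk1 : (⟨1, hN⟩ : Fin N) ≤ s.symm j := by
      have : s.symm j ≠ ⟨0, by omega⟩ := by
        intro h; apply hj; rw [hk, h]
      have h0 : 0 < (s.symm j : ℕ) := by
        rcases Nat.eq_zero_or_pos (s.symm j : ℕ) with h | h
        · exact absurd (Fin.ext h) this
        · exact h
      exact Fin.mk_le_of_le_val h0
    rw [hts, hk]
    exact Tuple.monotone_sort lam hk1
  -- coefficients of the all-ones vector vanish away from j0
  have ha : ∀ j : Fin N, j ≠ j0 → (inner ℝ (b j) one : ℝ) = 0 := by
    intro j hj
    have h1 : (inner ℝ (b j) (Matrix.toEuclideanLin M one) : ℝ)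
        = lam j * inner ℝ (b j) one := repr_toEuclideanLin hM one j
    rw [hone, inner_zero_right] at h1
    have := hge j hj
    have hpos : 0 < lam j := lt_of_lt_of_le ht this
    have := h1.symm
    rcases mul_eq_zero.mp this with h | h
    · exact absurd h (ne_of_gt hpos)
    · exact h
  -- the coefficient of the all-ones vector at j0 is nonzero
  have hone_ne : (inner ℝ (b j0) one : ℝ) ≠ 0 := by
    intro h0
    have hnorm : ‖one‖ ^ 2 = ∑ j, (inner ℝ (b j) one : ℝ) ^ 2 := normsq_eq_sum_repr b one
    have : ∑ j, (inner ℝ (b j) one : ℝ) ^ 2 = 0 := by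
      refine Finset.sum_eq_zero fun j _ => ?_
      by_cases hj : j = j0
      · rw [hj, h0]; ring
      · rw [ha j hj]; ring
    rw [this] at hnorm
    have : one = 0 := by
      have := (pow_eq_zero_iff (two_ne_zero)).mp hnorm
      exact norm_eq_zero.mp this
    have h1 : (1:ℝ) = 0 := by
      have h2 := congrArg (fun v : EuclideanSpace ℝ (Fin N) => v (⟨0, by omega⟩ : Fin N)) this
      simpa [hone'] using h2
    norm_num at h1
  -- x is orthogonal to one, hence its j0 coefficient vanishes
  have hxone : (inner ℝ one x : ℝ) = 0 := by
    have : (inner ℝ one x : ℝ) = ∑ i, x i := by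
      simp [hone', PiLp.inner_apply, RCLike.inner_apply]
    rw [this, hx]
  have hc0 : (inner ℝ (b j0) x : ℝ) = 0 := by
    have hexp : (inner ℝ one x : ℝ) = ∑ j, (inner ℝ (b j) one : ℝ) * (inner ℝ (b j) x : ℝ) :=
      inner_eq_sum_repr b one x
    rw [hxone] at hexp
    have : ∑ j, (inner ℝ (b j) one : ℝ) * (inner ℝ (b j) x : ℝ)
        = (inner ℝ (b j0) one : ℝ) * (inner ℝ (b j0) x : ℝ) := by
      rw [← Finset.add_sum_erase _ _ (Finset.mem_univ j0)]
      have : ∑ j ∈ Finset.univ.erase j0, (inner ℝ (b j) one : ℝ) * (inner ℝ (b j) x : ℝ) = 0 :=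
        Finset.sum_eq_zero fun j hj => by rw [ha j (Finset.ne_of_mem_erase hj), zero_mul]
      rw [this, add_zero]
    rw [this] at hexp
    exact (mul_eq_zero.mp hexp.symm).resolve_left hone_ne
  -- conclude
  rw [quad_eq_sum hM, normsq_eq_sum_repr b, Finset.mul_sum]
  refine Finset.sum_le_sum fun j _ => ?_
  by_cases hj : j = j0
  · rw [hj, hc0]; simp
  · exact mul_le_mul_of_nonneg_right (hge j hj) (sq_nonneg _)

lemma lap_isHermitian {n : ℕ} (A : Matrix (Fin n) (Fin n) ℝ)
    (hAsymm : ∀ i j, A i j = A j i) : (lap A).IsHermitian := by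
  refine Matrix.IsHermitian.ext fun i j => ?_
  simp only [lap, Matrix.of_apply, star_trivial]
  by_cases h : i = j
  · rw [h]
  · rw [if_neg h, if_neg (Ne.symm h), hAsymm]

lemma lap_rowsum {n : ℕ} (A : Matrix (Fin n) (Fin n) ℝ) (i : Fin n) :
    ∑ j, lap A i j = 0 := by
  rw [← Finset.add_sum_erase _ _ (Finset.mem_univ i)]
  have h1 : lap A i i = ∑ k ∈ Finset.univ.erase i, A i k := if_pos rfl
  have h2 : ∑ j ∈ Finset.univ.erase i, lap A i j
      = -∑ j ∈ Finset.univ.erase i, A i j := by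
    rw [← Finset.sum_neg_distrib]
    exact Finset.sum_congr rfl fun j hj => by
      simp only [lap, Matrix.of_apply, if_neg (Ne.symm (Finset.ne_of_mem_erase hj))]
  rw [h1, h2]; ring

lemma lap_rayleigh {n : ℕ} (A : Matrix (Fin n) (Fin n) ℝ)
    (hAsymm : ∀ i j, A i j = A j i)
    (hconn : 0 < eigTwo (lap A)) (x : Fin n → ℝ) (hx : ∑ i, x i = 0) :
    eigTwo (lap A) * ∑ i, x i ^ 2 ≤ x ⬝ᵥ (lap A *ᵥ x) := by
  set N := Fintype.card (Fin n) with hNdef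
  set e : Fin n ≃ Fin N := Fintype.equivFin (Fin n) with he
  set M' : Matrix (Fin N) (Fin N) ℝ := Matrix.reindex e e (lap A) with hM'def
  have hL : (lap A).IsHermitian := lap_isHermitian A hAsymm
  have hM' : M'.IsHermitian := by
    rw [hM'def, Matrix.reindex_apply]
    exact hL.submatrix _
  by_cases hN : 1 < N
  swap
  · rw [eigTwo, dif_neg hN] at hconn; exact absurd hconn (lt_irrefl 0)
  have hts : eigTwo (lap A)
      = hM'.eigenvalues (Tuple.sort hM'.eigenvalues ⟨1, hN⟩) := by
    rw [eigTwo, dif_pos hN]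
    show matEigs M' (Tuple.sort (matEigs M') ⟨1, hN⟩) = _
    rw [matEigs_eq hM']
  have hone : Matrix.toEuclideanLin M' ((WithLp.equiv 2 _).symm (fun _ => (1:ℝ))) = 0 := by
    rw [WithLp.equiv_symm_apply, Matrix.toEuclideanLin_apply_piLp_toLp]
    have : M' *ᵥ (fun _ => (1:ℝ)) = 0 := by
      funext i
      show ∑ j, M' i j * 1 = 0
      simp only [mul_one, hM'def, Matrix.reindex_apply, Matrix.submatrix_apply]
      rw [Equiv.sum_comp e.symm (fun j => lap A (e.symm i) j)]
      exact lap_rowsum A _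
    rw [this, WithLp.toLp_zero]
  set x' : EuclideanSpace ℝ (Fin N) := (WithLp.equiv 2 _).symm (fun i => x (e.symm i))
    with hx'def
  have hx' : ∑ i, x' i = 0 := by
    show ∑ i, x (e.symm i) = 0
    rw [Equiv.sum_comp e.symm x]; exact hx
  have key := second_eig_rayleigh hN hM' hone hts hconn x' hx'
  have hnorm : ‖x'‖ ^ 2 = ∑ i, x i ^ 2 := by
    rw [← real_inner_self_eq_norm_sq, einner_eq_dot]
    show ∑ i, x (e.symm i) * x (e.symm i) = _
    rw [Equiv.sum_comp e.symm (fun i => x i * x i)]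
    exact Finset.sum_congr rfl fun i _ => (sq (x i)).symm
  have hquad : (inner ℝ x' (Matrix.toEuclideanLin M' x') : ℝ) = x ⬝ᵥ (lap A *ᵥ x) := by
    rw [einner_eq_dot]
    show ∑ i, x (e.symm i) * (∑ j, M' i j * x (e.symm j)) = _
    have hrow : ∀ i, ∑ j, M' i j * x (e.symm j) = (lap A *ᵥ x) (e.symm i) := by
      intro i
      simp only [hM'def, Matrix.reindex_apply, Matrix.submatrix_apply]
      rw [Equiv.sum_comp e.symm (fun j => lap A (e.symm i) j * x j)]
      rfl
    simp_rw [hrow]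
    rw [Equiv.sum_comp e.symm (fun i => x i * (lap A *ᵥ x) i)]
    rfl
  rw [hnorm, hquad] at key
  exact key

lemma dot_transpose {mm d : ℕ} (X : Matrix (Fin mm) (Fin d) ℝ)
    (a : EuclideanSpace ℝ (Fin mm)) (b : EuclideanSpace ℝ (Fin d)) :
    (inner ℝ (Matrix.toEuclideanLin Xᵀ a) b : ℝ) = inner ℝ a (Matrix.toEuclideanLin X b) := by
  rw [einner_eq_dot, einner_eq_dot]
  show (Xᵀ *ᵥ (WithLp.equiv 2 _ a)) ⬝ᵥ (WithLp.equiv 2 _ b)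
      = (WithLp.equiv 2 _ a) ⬝ᵥ (X *ᵥ (WithLp.equiv 2 _ b))
  rw [Matrix.mulVec_transpose, ← Matrix.dotProduct_mulVec]

lemma quad_coeff_zero {B C : ℝ} (h : ∀ t : ℝ, 0 ≤ C * t ^ 2 - 2 * B * t) : B = 0 := by
  have hC : 0 ≤ C := by
    have h1 := h 1; have h2 := h (-1); nlinarith
  have h1 := h (B / (C + 1))
  have hC1 : (0:ℝ) < C + 1 := by linarith
  rw [div_pow] at h1
  have h2 := mul_le_mul_of_nonneg_right h1 (le_of_lt (pow_pos hC1 2))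
  rw [zero_mul, sub_mul] at h2
  have h3 : C * (B ^ 2 / (C + 1) ^ 2) * (C + 1) ^ 2 = C * B ^ 2 := by
    field_simp
  have h4 : 2 * B * (B / (C + 1)) * (C + 1) ^ 2 = 2 * B ^ 2 * (C + 1) := by
    field_simp
  rw [h3, h4] at h2
  nlinarith [sq_nonneg B]

lemma posSemidef_smul {k : ℕ} {M : Matrix (Fin k) (Fin k) ℝ} (hM : M.PosSemidef)
    {c : ℝ} (hc : 0 ≤ c) : (c • M).PosSemidef := by
  constructor
  · unfold Matrix.IsHermitian
    rw [Matrix.conjTranspose_smul, star_trivial, hM.1]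
  · intro x
    exact (hM.smul hc).2 x

lemma transpose_mul_self_posSemidef {mm d : ℕ} (X : Matrix (Fin mm) (Fin d) ℝ) :
    (Xᵀ * X).PosSemidef := by
  have h : Xᴴ = Xᵀ := Matrix.conjTranspose_eq_transpose_of_trivial X
  rw [← h]
  exact Matrix.posSemidef_conjTranspose_mul_self X

lemma cross_bound {mm d : ℕ} [Nonempty (Fin d)] (X : Matrix (Fin mm) (Fin d) ℝ)
    (ε : EuclideanSpace ℝ (Fin mm)) :
    ‖(mm:ℝ)⁻¹ • Matrix.toEuclideanLin Xᵀ ε‖ ^ 2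
      ≤ lamMax ((mm:ℝ)⁻¹ • (Xᵀ * X)) * ((mm:ℝ)⁻¹ * ‖ε‖ ^ 2) := by
  have hQpsd : ((mm:ℝ)⁻¹ • (Xᵀ * X)).PosSemidef :=
    posSemidef_smul (transpose_mul_self_posSemidef X) (by positivity)
  rcases Nat.eq_zero_or_pos mm with hm | hm
  · subst hm
    have hz : ((0:ℕ):ℝ)⁻¹ = 0 := by norm_num
    rw [hz, zero_smul, norm_zero, zero_mul, mul_zero]
    norm_num
  have hmm : (0:ℝ) < (mm:ℝ) := by exact_mod_cast hm
  set u : EuclideanSpace ℝ (Fin d) := (mm:ℝ)⁻¹ • Matrix.toEuclideanLin Xᵀ ε with hu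
  set Xu : EuclideanSpace ℝ (Fin mm) := Matrix.toEuclideanLin X u with hXu
  clear_value u Xu
  -- ⟪u, u⟫ = (1/m) ⟪ε, X u⟫
  have h1 : (inner ℝ u u : ℝ) = (mm:ℝ)⁻¹ * inner ℝ ε Xu := by
    conv_lhs => rw [hu]
    rw [real_inner_smul_left, dot_transpose, ← hu, ← hXu]
  -- ‖Xu‖² = m * ⟪u, Q u⟫
  have hmul : Matrix.toEuclideanLin (Xᵀ * X) u = Matrix.toEuclideanLin Xᵀ Xu := by
    rw [hXu]
    show (WithLp.equiv 2 _).symm ((Xᵀ * X) *ᵥ (WithLp.equiv 2 _ u))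
        = (WithLp.equiv 2 _).symm (Xᵀ *ᵥ (X *ᵥ (WithLp.equiv 2 _ u)))
    rw [← Matrix.mulVec_mulVec]
  have h2 : ‖Xu‖ ^ 2 = (mm:ℝ) * inner ℝ u (Matrix.toEuclideanLin ((mm:ℝ)⁻¹ • (Xᵀ * X)) u) := by
    rw [_root_.map_smul, LinearMap.smul_apply, real_inner_smul_right, ← mul_assoc,
      mul_inv_cancel₀ (ne_of_gt hmm), one_mul, hmul, real_inner_comm, dot_transpose,
      ← hXu, real_inner_self_eq_norm_sq]
  have h3 : (inner ℝ u (Matrix.toEuclideanLin ((mm:ℝ)⁻¹ • (Xᵀ * X)) u) : ℝ)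
      ≤ lamMax ((mm:ℝ)⁻¹ • (Xᵀ * X)) * ‖u‖ ^ 2 := quad_le_lamMax hQpsd.1 u
  have hcs : (inner ℝ ε Xu : ℝ) ^ 2 ≤ ‖ε‖ ^ 2 * ‖Xu‖ ^ 2 := by
    have := abs_real_inner_le_norm ε Xu
    calc (inner ℝ ε Xu : ℝ) ^ 2 = |(inner ℝ ε Xu : ℝ)| ^ 2 := (sq_abs _).symm
      _ ≤ (‖ε‖ * ‖Xu‖) ^ 2 := by
          exact pow_le_pow_left₀ (abs_nonneg _) this 2
      _ = ‖ε‖ ^ 2 * ‖Xu‖ ^ 2 := by ring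
  set lM := lamMax ((mm:ℝ)⁻¹ • (Xᵀ * X)) with hlM
  have hlM0 : 0 ≤ lM := lamMax_nonneg hQpsd
  by_cases hu0 : ‖u‖ = 0
  · rw [hu0]
    have : (0:ℝ) ^ 2 = 0 := by norm_num
    rw [this]
    positivity
  have hupos : 0 < ‖u‖ := lt_of_le_of_ne (norm_nonneg u) (Ne.symm hu0)
  -- ‖u‖⁴ ≤ (1/m) lM ‖ε‖² ‖u‖²
  have key : ‖u‖ ^ 4 ≤ (mm:ℝ)⁻¹ * lM * ‖ε‖ ^ 2 * ‖u‖ ^ 2 := by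
    have e1 : ‖u‖ ^ 4 = ((inner ℝ u u : ℝ)) ^ 2 := by
      rw [real_inner_self_eq_norm_sq]; ring
    rw [e1, h1, mul_pow]
    calc ((mm:ℝ)⁻¹) ^ 2 * (inner ℝ ε Xu : ℝ) ^ 2
        ≤ ((mm:ℝ)⁻¹) ^ 2 * (‖ε‖ ^ 2 * ‖Xu‖ ^ 2) := by
          exact mul_le_mul_of_nonneg_left hcs (by positivity)
      _ = ((mm:ℝ)⁻¹) ^ 2 * ‖ε‖ ^ 2 * ((mm:ℝ) * inner ℝ u (Matrix.toEuclideanLin ((mm:ℝ)⁻¹ • (Xᵀ * X)) u)) := by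
          rw [h2]; ring
      _ ≤ ((mm:ℝ)⁻¹) ^ 2 * ‖ε‖ ^ 2 * ((mm:ℝ) * (lM * ‖u‖ ^ 2)) := by
          refine mul_le_mul_of_nonneg_left ?_ (by positivity)
          exact mul_le_mul_of_nonneg_left h3 (le_of_lt hmm)
      _ = (mm:ℝ)⁻¹ * lM * ‖ε‖ ^ 2 * ‖u‖ ^ 2 := by
          field_simp
  have := le_of_mul_le_mul_right (by
    calc ‖u‖ ^ 2 * ‖u‖ ^ 2 = ‖u‖ ^ 4 := by ring
      _ ≤ (mm:ℝ)⁻¹ * lM * ‖ε‖ ^ 2 * ‖u‖ ^ 2 := key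
      _ = (lM * ((mm:ℝ)⁻¹ * ‖ε‖ ^ 2)) * ‖u‖ ^ 2 := by ring) (by positivity : (0:ℝ) < ‖u‖ ^ 2)
  exact this

lemma sum_coord {d : ℕ} {ι : Type*} (s : Finset ι) (f : ι → EuclideanSpace ℝ (Fin d))
    (k : Fin d) : (∑ i ∈ s, f i) k = ∑ i ∈ s, f i k := by
  classical
  induction s using Finset.cons_induction with
  | empty => rfl
  | cons a s ha ih => rw [Finset.sum_cons, Finset.sum_cons, PiLp.add_apply, ih]

lemma enormsq_eq_sum {k : ℕ} (v : EuclideanSpace ℝ (Fin k)) : ‖v‖ ^ 2 = ∑ i, v i ^ 2 := by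
  rw [← real_inner_self_eq_norm_sq, einner_eq_dot]
  exact Finset.sum_congr rfl fun i _ => (sq (v i)).symm

lemma toEuclideanLin_mul_apply {mm d : ℕ} (X : Matrix (Fin mm) (Fin d) ℝ)
    (w : EuclideanSpace ℝ (Fin d)) :
    Matrix.toEuclideanLin (Xᵀ * X) w = Matrix.toEuclideanLin Xᵀ (Matrix.toEuclideanLin X w) := by
  show (WithLp.equiv 2 _).symm ((Xᵀ * X) *ᵥ (WithLp.equiv 2 _ w))
      = (WithLp.equiv 2 _).symm (Xᵀ *ᵥ (X *ᵥ (WithLp.equiv 2 _ w)))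
  rw [← Matrix.mulVec_mulVec]

set_option maxHeartbeats 1600000 in
/-- If all local datasets share a common parameter vector `w̄`, `λ₂(L) > 0`
and `λ̄_min > 0`, then the average `c̄` of the GTVMin solution satisfies
`‖c̄ − w̄‖₂² ≤ 2 (λ_max + λ_max²/(λ₂(L) α)) ∑ᵢ (1/mᵢ)‖ε⁽ⁱ⁾‖₂² / (n λ̄_min²)`. -/
theorem gtvmin_average_error_bound
    {n d : ℕ} (A : Matrix (Fin n) (Fin n) ℝ)
    (hAsymm : ∀ i j, A i j = A j i) (hAnonneg : ∀ i j, 0 ≤ A i j)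
    (hAdiag : ∀ i, A i i = 0)
    (m : Fin n → ℕ)
    (X : (i : Fin n) → Matrix (Fin (m i)) (Fin d) ℝ)
    (y : (i : Fin n) → EuclideanSpace ℝ (Fin (m i)))
    (wbar : EuclideanSpace ℝ (Fin d))
    (ε : (i : Fin n) → EuclideanSpace ℝ (Fin (m i)))
    (hy : ∀ i, y i = Matrix.toEuclideanLin (X i) wbar + ε i)
    (α : ℝ) (hα : 0 < α)
    (Qb : Fin n → Matrix (Fin d) (Fin d) ℝ)
    (hQb : ∀ i, Qb i = (m i : ℝ)⁻¹ • ((X i)ᵀ * X i))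
    (lmax lbar : ℝ)
    (hlmax : lmax = ⨆ i, lamMax (Qb i))
    (hlbar : lbar = lamMin ((n : ℝ)⁻¹ • ∑ i, Qb i))
    (hconn : 0 < eigTwo (lap A)) (hlbarpos : 0 < lbar)
    (what : Fin n → EuclideanSpace ℝ (Fin d))
    (hmin : ∀ w : Fin n → EuclideanSpace ℝ (Fin d),
      gtvObj A m X y α what ≤ gtvObj A m X y α w) :
    ‖(n : ℝ)⁻¹ • (∑ i, what i) - wbar‖ ^ 2 ≤
      2 * (lmax + lmax ^ 2 / (eigTwo (lap A) * α)) *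
        (∑ i, (1 / (m i : ℝ)) * ‖ε i‖ ^ 2) / ((n : ℝ) * lbar ^ 2) := by
  classical
  -- basic setup
  have hn2 : 1 < n := by
    by_contra h
    have hcard : ¬ (1 < Fintype.card (Fin n)) := by rw [Fintype.card_fin]; omega
    rw [eigTwo, dif_neg hcard] at hconn
    exact absurd hconn (lt_irrefl 0)
  have hn0 : (0:ℝ) < n := by
    have : 0 < n := by omega
    exact_mod_cast this
  haveI : Nonempty (Fin n) := ⟨⟨0, by omega⟩⟩
  haveI hdne : Nonempty (Fin d) := by
    by_contra hd
    haveI : IsEmpty (Fin d) := not_nonempty_iff.mp hd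
    rw [hlbar, lamMin, iInf_of_isEmpty, Real.sInf_empty] at hlbarpos
    exact absurd hlbarpos (lt_irrefl 0)
  set t := eigTwo (lap A) with htdef
  set σ := ∑ i, (1 / (m i : ℝ)) * ‖ε i‖ ^ 2 with hσdef
  have hσ0 : 0 ≤ σ := Finset.sum_nonneg fun i _ => by positivity
  have hQpsd : ∀ i, (Qb i).PosSemidef := fun i => by
    rw [hQb i]
    exact posSemidef_smul (transpose_mul_self_posSemidef (X i)) (by positivity)
  have hlmax_i : ∀ i, lamMax (Qb i) ≤ lmax := fun i => by
    rw [hlmax]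
    exact le_ciSup (f := fun i => lamMax (Qb i)) (Set.Finite.bddAbove (Set.finite_range _)) i
  have hlmax0 : 0 ≤ lmax :=
    le_trans (lamMax_nonneg (hQpsd (Classical.arbitrary _))) (hlmax_i _)
  set cbar : EuclideanSpace ℝ (Fin d) := (n:ℝ)⁻¹ • (∑ i, what i) with hcbar
  set Δ : Fin n → EuclideanSpace ℝ (Fin d) := fun i => what i - cbar with hΔ
  set D : EuclideanSpace ℝ (Fin d) := cbar - wbar with hD
  -- Step 1 : value at the constant tuple
  have hub : gtvObj A m X y α what ≤ σ := by
    have h := hmin (fun _ => wbar)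
    have hconst : gtvObj A m X y α (fun _ => wbar) = σ := by
      simp only [gtvObj]
      have h1 : ∀ i, y i - Matrix.toEuclideanLin (X i) wbar = ε i := fun i => by
        rw [hy i]; abel
      have h2 : ∑ p ∈ Finset.univ.filter (fun p : Fin n × Fin n => p.1 < p.2),
          A p.1 p.2 * ‖(wbar : EuclideanSpace ℝ (Fin d)) - wbar‖ ^ 2 = 0 :=
        Finset.sum_eq_zero fun p _ => by rw [sub_self, norm_zero]; ring
      simp_rw [h1]
      rw [h2, mul_zero, add_zero]
    rw [hconst] at h; exact h
  set G := ∑ p ∈ Finset.univ.filter (fun p : Fin n × Fin n => p.1 < p.2),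
      A p.1 p.2 * ‖what p.1 - what p.2‖ ^ 2 with hG
  have hGb : α * G ≤ σ := by
    have hloss : 0 ≤ ∑ i, (1 / (m i : ℝ)) * ‖y i - Matrix.toEuclideanLin (X i) (what i)‖ ^ 2 :=
      Finset.sum_nonneg fun i _ => by positivity
    have h := hub; rw [gtvObj] at h; rw [← hG] at h; linarith
  -- Step 2 : sum of deviations vanishes
  have hΔsum : ∑ i, Δ i = 0 := by
    have h1 : ∑ i, Δ i = (∑ i, what i) - (n : ℕ) • cbar := by
      simp only [hΔ]
      rw [Finset.sum_sub_distrib, Finset.sum_const, Finset.card_univ, Fintype.card_fin]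
    have h2 : (n : ℕ) • cbar = ∑ i, what i := by
      rw [hcbar, ← Nat.cast_smul_eq_nsmul ℝ, smul_smul, mul_inv_cancel₀ (ne_of_gt hn0),
        one_smul]
    rw [h1, h2, sub_self]
  -- Step 3 : bound on sum of squared deviations
  have hG2 : ∀ p1 p2 : Fin n, ‖what p1 - what p2‖ ^ 2 = ∑ k, (Δ p1 k - Δ p2 k) ^ 2 := by
    intro p1 p2
    have h1 : what p1 - what p2 = Δ p1 - Δ p2 := by simp only [hΔ]; abel
    rw [h1, enormsq_eq_sum]
    exact Finset.sum_congr rfl fun k _ => by rw [PiLp.sub_apply]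
  have hGlower : t * ∑ i, ‖Δ i‖ ^ 2 ≤ G := by
    have hx0 : ∀ k : Fin d, ∑ i, (fun i => Δ i k) i = 0 := fun k => by
      have h := congrArg (fun v : EuclideanSpace ℝ (Fin d) => v k) hΔsum
      simpa [sum_coord] using h
    have hquadk : ∀ k : Fin d,
        ∑ p ∈ Finset.univ.filter (fun p : Fin n × Fin n => p.1 < p.2),
          A p.1 p.2 * (Δ p.1 k - Δ p.2 k) ^ 2
        = (fun i => Δ i k) ⬝ᵥ (lap A *ᵥ (fun i => Δ i k)) := fun k =>
      mul_left_cancel₀ two_ne_zero (lap_quad_eq A hAsymm hAdiag (fun i => Δ i k))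
    calc t * ∑ i, ‖Δ i‖ ^ 2 = ∑ k : Fin d, t * ∑ i, Δ i k ^ 2 := by
          simp_rw [enormsq_eq_sum]
          rw [Finset.sum_comm, Finset.mul_sum]
      _ ≤ ∑ k : Fin d, (fun i => Δ i k) ⬝ᵥ (lap A *ᵥ (fun i => Δ i k)) := by
          refine Finset.sum_le_sum fun k _ => ?_
          exact lap_rayleigh A hAsymm hconn (fun i => Δ i k) (hx0 k)
      _ = G := by
          rw [hG]
          simp_rw [hG2, Finset.mul_sum]
          rw [Finset.sum_comm]
          exact Finset.sum_congr rfl fun k _ => (hquadk k).symm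
  have hdelta : ∑ i, ‖Δ i‖ ^ 2 ≤ σ / (t * α) := by
    rw [le_div_iff₀ (by positivity)]
    calc (∑ i, ‖Δ i‖ ^ 2) * (t * α) = α * (t * ∑ i, ‖Δ i‖ ^ 2) := by ring
      _ ≤ α * G := mul_le_mul_of_nonneg_left hGlower (le_of_lt hα)
      _ ≤ σ := hGb
  -- Step 4 : stationarity
  set r : (i : Fin n) → EuclideanSpace ℝ (Fin (m i)) :=
    fun i => y i - Matrix.toEuclideanLin (X i) (what i) with hr
  have hB : ∀ v : EuclideanSpace ℝ (Fin d),
      ∑ i, (1 / (m i : ℝ)) * (inner ℝ (Matrix.toEuclideanLin (X i) v) (r i) : ℝ) = 0 := by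
    intro v
    set B := ∑ i, (1 / (m i : ℝ)) * (inner ℝ (Matrix.toEuclideanLin (X i) v) (r i) : ℝ) with hBd
    set C := ∑ i, (1 / (m i : ℝ)) * ‖Matrix.toEuclideanLin (X i) v‖ ^ 2 with hCd
    refine quad_coeff_zero (B := B) (C := C) fun s => ?_
    have hobj : gtvObj A m X y α (fun i => what i + s • v)
        = gtvObj A m X y α what + (C * s ^ 2 - 2 * B * s) := by
      simp only [gtvObj]
      have hloss : ∀ i, ‖y i - Matrix.toEuclideanLin (X i) (what i + s • v)‖ ^ 2
          = ‖r i‖ ^ 2 - 2 * s * (inner ℝ (Matrix.toEuclideanLin (X i) v) (r i) : ℝ)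
            + s ^ 2 * ‖Matrix.toEuclideanLin (X i) v‖ ^ 2 := by
        intro i
        have h1 : y i - Matrix.toEuclideanLin (X i) (what i + s • v)
            = r i - s • Matrix.toEuclideanLin (X i) v := by
          show y i - Matrix.toEuclideanLin (X i) (what i + s • v) = (y i - Matrix.toEuclideanLin (X i) (what i)) - s • Matrix.toEuclideanLin (X i) v
          rw [map_add, _root_.map_smul, sub_add_eq_sub_sub]
        rw [h1, @norm_sub_sq_real, real_inner_smul_right, norm_smul, mul_pow,
          Real.norm_eq_abs, sq_abs, real_inner_comm]
        ring
      have hri : ∀ i, y i - Matrix.toEuclideanLin (X i) (what i) = r i := fun i => rfl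
      simp_rw [hloss, hri]
      have hterm : ∀ i ∈ Finset.univ, (1 / (m i : ℝ)) *
            (‖r i‖ ^ 2 - 2 * s * (inner ℝ (Matrix.toEuclideanLin (X i) v) (r i) : ℝ)
              + s ^ 2 * ‖Matrix.toEuclideanLin (X i) v‖ ^ 2)
          = (1 / (m i : ℝ)) * ‖r i‖ ^ 2
            + (s ^ 2 * ((1 / (m i : ℝ)) * ‖Matrix.toEuclideanLin (X i) v‖ ^ 2)
              - 2 * s * ((1 / (m i : ℝ))
                * (inner ℝ (Matrix.toEuclideanLin (X i) v) (r i) : ℝ))) := fun i _ => by ring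
      rw [Finset.sum_congr rfl hterm, Finset.sum_add_distrib, Finset.sum_sub_distrib,
        ← Finset.mul_sum, ← Finset.mul_sum, ← hCd, ← hBd]
      have hpair : ∀ p : Fin n × Fin n,
          (what p.1 + s • v) - (what p.2 + s • v) = what p.1 - what p.2 := fun p => by abel
      simp_rw [hpair]
      ring
    have hge := hmin (fun i => what i + s • v)
    rw [hobj] at hge
    linarith
  -- Step 5 : normal equations
  set a : EuclideanSpace ℝ (Fin d) :=
    ∑ i, (m i : ℝ)⁻¹ • Matrix.toEuclideanLin (X i)ᵀ (ε i) with ha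
  set b : EuclideanSpace ℝ (Fin d) :=
    ∑ i, Matrix.toEuclideanLin (Qb i) (Δ i) with hb
  set z : EuclideanSpace ℝ (Fin d) :=
    ∑ i, (m i : ℝ)⁻¹ • Matrix.toEuclideanLin (X i)ᵀ (r i) with hz
  have hzzero : z = 0 := by
    have h2 : ∀ u : EuclideanSpace ℝ (Fin d),
        ∑ i, (1 / (m i : ℝ)) * (inner ℝ (Matrix.toEuclideanLin (X i) u) (r i) : ℝ)
          = inner ℝ u z := by
      intro u
      rw [hz, inner_sum]
      refine Finset.sum_congr rfl fun i _ => ?_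
      rw [real_inner_smul_right]
      have hcomm : (inner ℝ u (Matrix.toEuclideanLin (X i)ᵀ (r i)) : ℝ)
          = inner ℝ (Matrix.toEuclideanLin (X i) u) (r i) := by
        rw [real_inner_comm, dot_transpose]
        exact real_inner_comm _ _
      rw [hcomm, one_div]
    have h3 : (inner ℝ z z : ℝ) = 0 := by rw [← h2 z]; exact hB z
    exact inner_self_eq_zero.mp h3
  have hQapp : ∀ (i : Fin n) (w : EuclideanSpace ℝ (Fin d)),
      (m i : ℝ)⁻¹ • Matrix.toEuclideanLin (X i)ᵀ (Matrix.toEuclideanLin (X i) w)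
        = Matrix.toEuclideanLin (Qb i) w := by
    intro i w
    rw [hQb i, _root_.map_smul, LinearMap.smul_apply, toEuclideanLin_mul_apply]
  have hterm2 : ∀ i, (m i : ℝ)⁻¹ • Matrix.toEuclideanLin (X i)ᵀ (r i)
      = (m i : ℝ)⁻¹ • Matrix.toEuclideanLin (X i)ᵀ (ε i)
        - Matrix.toEuclideanLin (Qb i) (Δ i) - Matrix.toEuclideanLin (Qb i) D := by
    intro i
    have h1 : r i = ε i - Matrix.toEuclideanLin (X i) (Δ i + D) := by
      have hΔD : Δ i + D = what i - wbar := by simp only [hΔ, hD]; abel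
      simp only [hr]
      rw [hy i, hΔD, map_sub]
      abel
    rw [h1]
    simp only [map_sub, map_add, smul_sub, smul_add, hQapp]
    abel
  have hsum : Matrix.toEuclideanLin (∑ i, Qb i) D = a - b := by
    have h0 : z = a - b - ∑ i, Matrix.toEuclideanLin (Qb i) D := by
      rw [hz]
      simp_rw [hterm2]
      rw [Finset.sum_sub_distrib, Finset.sum_sub_distrib, ← ha, ← hb]
    have h1 : ∑ i, Matrix.toEuclideanLin (Qb i) D
        = Matrix.toEuclideanLin (∑ i, Qb i) D := by
      rw [map_sum, LinearMap.sum_apply]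
    rw [hzzero, h1] at h0
    exact (sub_eq_zero.mp h0.symm).symm
  -- Step 6 : lower bound via smallest eigenvalue
  have hpsdsum : (∑ i, Qb i).PosSemidef :=
    Finset.sum_induction Qb Matrix.PosSemidef (fun u w hu hw => hu.add hw)
      Matrix.PosSemidef.zero (fun i _ => hQpsd i)
  have hDbound : (n:ℝ) * lbar * ‖D‖ ^ 2 ≤ ‖D‖ * ‖a - b‖ := by
    have hherm : ((n:ℝ)⁻¹ • ∑ i, Qb i).IsHermitian :=
      (posSemidef_smul hpsdsum (by positivity)).1
    have h1 : lbar * ‖D‖ ^ 2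
        ≤ inner ℝ D (Matrix.toEuclideanLin ((n:ℝ)⁻¹ • ∑ i, Qb i) D) := by
      rw [hlbar]; exact lamMin_mul_normsq_le hherm D
    have h2 : (inner ℝ D (Matrix.toEuclideanLin ((n:ℝ)⁻¹ • ∑ i, Qb i) D) : ℝ)
        = (n:ℝ)⁻¹ * inner ℝ D (Matrix.toEuclideanLin (∑ i, Qb i) D) := by
      rw [_root_.map_smul, LinearMap.smul_apply, real_inner_smul_right]
    have h3 : (inner ℝ D (Matrix.toEuclideanLin (∑ i, Qb i) D) : ℝ) ≤ ‖D‖ * ‖a - b‖ := by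
      rw [hsum]; exact real_inner_le_norm D (a - b)
    rw [h2] at h1
    have h5 : (n:ℝ) * (lbar * ‖D‖ ^ 2)
        ≤ (n:ℝ) * ((n:ℝ)⁻¹ * inner ℝ D (Matrix.toEuclideanLin (∑ i, Qb i) D)) :=
      mul_le_mul_of_nonneg_left h1 (le_of_lt hn0)
    have h5' : (n:ℝ) * ((n:ℝ)⁻¹ * (inner ℝ D (Matrix.toEuclideanLin (∑ i, Qb i) D) : ℝ))
        = inner ℝ D (Matrix.toEuclideanLin (∑ i, Qb i) D) := by
      rw [← mul_assoc, mul_inv_cancel₀ (ne_of_gt hn0), one_mul]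
    rw [h5'] at h5
    calc (n:ℝ) * lbar * ‖D‖ ^ 2 = (n:ℝ) * (lbar * ‖D‖ ^ 2) := by ring
      _ ≤ _ := h5
      _ ≤ ‖D‖ * ‖a - b‖ := h3
  -- Step 7 : bounds on the two sums
  have hasq : ‖a‖ ^ 2 ≤ (n:ℝ) * (lmax * σ) := by
    have h1 : ‖a‖ ≤ ∑ i, ‖(m i : ℝ)⁻¹ • Matrix.toEuclideanLin (X i)ᵀ (ε i)‖ := by
      rw [ha]; exact norm_sum_le _ _
    have h2 : ‖a‖ ^ 2 ≤ (∑ i, ‖(m i : ℝ)⁻¹ • Matrix.toEuclideanLin (X i)ᵀ (ε i)‖) ^ 2 :=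
      pow_le_pow_left₀ (norm_nonneg a) h1 2
    have h3 : (∑ i, ‖(m i : ℝ)⁻¹ • Matrix.toEuclideanLin (X i)ᵀ (ε i)‖) ^ 2
        ≤ (n:ℝ) * ∑ i, ‖(m i : ℝ)⁻¹ • Matrix.toEuclideanLin (X i)ᵀ (ε i)‖ ^ 2 := by
      have h := sq_sum_le_card_mul_sum_sq
        (s := (Finset.univ : Finset (Fin n)))
        (f := fun i => ‖(m i : ℝ)⁻¹ • Matrix.toEuclideanLin (X i)ᵀ (ε i)‖)
      simpa [Finset.card_univ, Fintype.card_fin] using h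
    have h4 : ∑ i, ‖(m i : ℝ)⁻¹ • Matrix.toEuclideanLin (X i)ᵀ (ε i)‖ ^ 2 ≤ lmax * σ := by
      rw [hσdef, Finset.mul_sum]
      refine Finset.sum_le_sum fun i _ => ?_
      have hc := cross_bound (X i) (ε i)
      rw [← hQb i] at hc
      calc ‖(m i : ℝ)⁻¹ • Matrix.toEuclideanLin (X i)ᵀ (ε i)‖ ^ 2
          ≤ lamMax (Qb i) * ((m i : ℝ)⁻¹ * ‖ε i‖ ^ 2) := hc
        _ ≤ lmax * ((m i : ℝ)⁻¹ * ‖ε i‖ ^ 2) :=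
            mul_le_mul_of_nonneg_right (hlmax_i i) (by positivity)
        _ = lmax * ((1 / (m i : ℝ)) * ‖ε i‖ ^ 2) := by rw [one_div]
    calc ‖a‖ ^ 2 ≤ (∑ i, ‖(m i : ℝ)⁻¹ • Matrix.toEuclideanLin (X i)ᵀ (ε i)‖) ^ 2 := h2
      _ ≤ (n:ℝ) * ∑ i, ‖(m i : ℝ)⁻¹ • Matrix.toEuclideanLin (X i)ᵀ (ε i)‖ ^ 2 := h3
      _ ≤ (n:ℝ) * (lmax * σ) := mul_le_mul_of_nonneg_left h4 (le_of_lt hn0)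
  have hbsq : ‖b‖ ^ 2 ≤ (n:ℝ) * (lmax ^ 2 * (σ / (t * α))) := by
    have h1 : ‖b‖ ≤ ∑ i, ‖Matrix.toEuclideanLin (Qb i) (Δ i)‖ := by
      rw [hb]; exact norm_sum_le _ _
    have h2 : ‖b‖ ^ 2 ≤ (∑ i, ‖Matrix.toEuclideanLin (Qb i) (Δ i)‖) ^ 2 :=
      pow_le_pow_left₀ (norm_nonneg b) h1 2
    have h3 : (∑ i, ‖Matrix.toEuclideanLin (Qb i) (Δ i)‖) ^ 2
        ≤ (n:ℝ) * ∑ i, ‖Matrix.toEuclideanLin (Qb i) (Δ i)‖ ^ 2 := by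
      have h := sq_sum_le_card_mul_sum_sq
        (s := (Finset.univ : Finset (Fin n)))
        (f := fun i => ‖Matrix.toEuclideanLin (Qb i) (Δ i)‖)
      simpa [Finset.card_univ, Fintype.card_fin] using h
    have h4 : ∑ i, ‖Matrix.toEuclideanLin (Qb i) (Δ i)‖ ^ 2
        ≤ lmax ^ 2 * (σ / (t * α)) := by
      calc ∑ i, ‖Matrix.toEuclideanLin (Qb i) (Δ i)‖ ^ 2
          ≤ ∑ i, lmax ^ 2 * ‖Δ i‖ ^ 2 := by
            refine Finset.sum_le_sum fun i _ => ?_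
            calc ‖Matrix.toEuclideanLin (Qb i) (Δ i)‖ ^ 2
                ≤ lamMax (Qb i) ^ 2 * ‖Δ i‖ ^ 2 := normsq_toEuclideanLin_le (hQpsd i) (Δ i)
              _ ≤ lmax ^ 2 * ‖Δ i‖ ^ 2 := by
                  refine mul_le_mul_of_nonneg_right ?_ (sq_nonneg _)
                  exact pow_le_pow_left₀ (lamMax_nonneg (hQpsd i)) (hlmax_i i) 2
        _ = lmax ^ 2 * ∑ i, ‖Δ i‖ ^ 2 := by rw [Finset.mul_sum]
        _ ≤ lmax ^ 2 * (σ / (t * α)) :=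
            mul_le_mul_of_nonneg_left hdelta (by positivity)
    calc ‖b‖ ^ 2 ≤ (∑ i, ‖Matrix.toEuclideanLin (Qb i) (Δ i)‖) ^ 2 := h2
      _ ≤ (n:ℝ) * ∑ i, ‖Matrix.toEuclideanLin (Qb i) (Δ i)‖ ^ 2 := h3
      _ ≤ (n:ℝ) * (lmax ^ 2 * (σ / (t * α))) := mul_le_mul_of_nonneg_left h4 (le_of_lt hn0)
  -- Step 8 : combine
  have habsq : ‖a - b‖ ^ 2 ≤ 2 * ‖a‖ ^ 2 + 2 * ‖b‖ ^ 2 := by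
    have h1 : ‖a - b‖ ≤ ‖a‖ + ‖b‖ := norm_sub_le a b
    have h2 : ‖a - b‖ ^ 2 ≤ (‖a‖ + ‖b‖) ^ 2 := pow_le_pow_left₀ (norm_nonneg _) h1 2
    nlinarith [sq_nonneg (‖a‖ - ‖b‖)]
  have ht0 : (0:ℝ) < t := hconn
  have hrhs0 : 0 ≤ 2 * (lmax + lmax ^ 2 / (t * α)) * σ / ((n:ℝ) * lbar ^ 2) := by
    apply div_nonneg
    · apply mul_nonneg
      · have h1 : 0 ≤ lmax ^ 2 / (t * α) := div_nonneg (sq_nonneg _) (by positivity)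
        linarith
      · exact hσ0
    · positivity
  by_cases hD0 : ‖D‖ = 0
  · show ‖D‖ ^ 2 ≤ _
    rw [hD0]
    simpa using hrhs0
  · have hDpos : 0 < ‖D‖ := lt_of_le_of_ne (norm_nonneg D) (Ne.symm hD0)
    have h6 : ‖D‖ ≤ ‖a - b‖ / ((n:ℝ) * lbar) := by
      rw [le_div_iff₀ (by positivity)]
      nlinarith [hDbound, hDpos]
    have h7 : ‖D‖ ^ 2 ≤ ‖a - b‖ ^ 2 / ((n:ℝ) * lbar) ^ 2 := by
      have h := pow_le_pow_left₀ (norm_nonneg D) h6 2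
      rwa [div_pow] at h
    show ‖D‖ ^ 2 ≤ _
    calc ‖D‖ ^ 2 ≤ ‖a - b‖ ^ 2 / ((n:ℝ) * lbar) ^ 2 := h7
      _ ≤ (2 * ((n:ℝ) * (lmax * σ)) + 2 * ((n:ℝ) * (lmax ^ 2 * (σ / (t * α)))))
            / ((n:ℝ) * lbar) ^ 2 := by
          have hnum : ‖a - b‖ ^ 2
              ≤ 2 * ((n:ℝ) * (lmax * σ)) + 2 * ((n:ℝ) * (lmax ^ 2 * (σ / (t * α)))) := by
            linarith
          gcongr
      _ = 2 * (lmax + lmax ^ 2 / (t * α)) * σ / ((n:ℝ) * lbar ^ 2) := by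
          field_simp
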